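/- Let G = (V, ω, μ) be a locally finite connected weighted graph with D_μ < ∞ and with volume growth of positive degree m > 0, and let α > 0 with 0 < mα < 1. Then for every bounded, nonnegative, not identically zero initial value a : V → ℝ, there is no nonnegative global solution u : [0,∞) × V → ℝ of the semilinear heat equation ∂_t u(t,x) = Δu(t,x) + u(t,x)^{1+α} on (0,∞) × V with u(0,x) = a(x); i.e., the solution blows up in finite time. -/

import Mathlib

open Set Real

private lemma clamp_le_aux {a b c : ℝ} (h : a ≤ b + c) (hc : 0 ≤ c) :
    max 0 (min 1 a) ≤ max 0 (min 1 b) + c := by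
  simp only [max_def, min_def]
  split_ifs <;> linarith

private lemma pow_sub_pow_le_aux {a b : ℝ} (hb : 0 ≤ b) (hba : b ≤ a) (n : ℕ) :
    a ^ n - b ^ n ≤ n * a ^ (n - 1) * (a - b) := by
  have ha : 0 ≤ a := hb.trans hba
  rw [← geom_sum₂_mul a b n]
  have hsum : (∑ i ∈ Finset.range n, a ^ i * b ^ (n - 1 - i)) ≤ n * a ^ (n - 1) := by
    calc (∑ i ∈ Finset.range n, a ^ i * b ^ (n - 1 - i))
        ≤ ∑ _i ∈ Finset.range n, a ^ (n - 1) := by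
          apply Finset.sum_le_sum
          intro i hi
          calc a ^ i * b ^ (n - 1 - i) ≤ a ^ i * a ^ (n - 1 - i) := by
                exact mul_le_mul_of_nonneg_left (pow_le_pow_left₀ hb hba _) (pow_nonneg ha _)
            _ = a ^ (i + (n - 1 - i)) := by rw [pow_add]
            _ = a ^ (n - 1) := by
                congr 1
                have := Finset.mem_range.mp hi
                omega
      _ = n * a ^ (n - 1) := by rw [Finset.sum_const, Finset.card_range, nsmul_eq_mul]
  exact mul_le_mul_of_nonneg_right hsum (by linarith)

private lemma conj_aux {α : ℝ} (hα : 0 < α) : (1 + α).HolderConjugate ((1 + α) / α) := by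
  rw [Real.holderConjugate_iff_eq_conjExponent (by linarith)]
  congr 1; ring

private lemma young_eps {α : ℝ} (hα : 0 < α) {u W b : ℝ} (hu : 0 ≤ u) (hW : 0 ≤ W) (hb : 0 ≤ b) :
    u * W ^ (1 / (1 + α)) * b ≤
      u ^ (1 + α) * W / 2
        + ((((1 + α) / 2) ^ (1 / (1 + α)))⁻¹ ^ ((1 + α) / α) / ((1 + α) / α))
            * b ^ ((1 + α) / α) := by
  set p := 1 + α with hp
  set q := (1 + α) / α with hq
  have hpq : p.HolderConjugate q := conj_aux hα
  have hp0 : (0:ℝ) < p := by rw [hp]; linarith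
  set T : ℝ := (p / 2) ^ (1 / p) with hT
  have hT0 : 0 < T := rpow_pos_of_pos (by linarith) _
  have h1 : u * W ^ (1 / p) * b = (u * W ^ (1/p) * T) * (b * T⁻¹) := by
    field_simp
  rw [h1]
  have h2 := Real.young_inequality_of_nonneg
    (a := u * W ^ (1/p) * T) (b := b * T⁻¹)
    (by positivity) (by positivity) hpq
  refine h2.trans (le_of_eq ?_)
  have hWp : (W ^ (1/p)) ^ p = W := by
    rw [← rpow_mul hW, one_div, inv_mul_cancel₀ hp0.ne', rpow_one]
  have hTp : T ^ p = p / 2 := by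
    rw [hT, ← rpow_mul (by linarith), one_div, inv_mul_cancel₀ hp0.ne', rpow_one]
  have hup : (u * W ^ (1/p) * T) ^ p = u ^ p * W * (p / 2) := by
    rw [mul_rpow (by positivity) hT0.le, mul_rpow hu (by positivity), hWp, hTp]
  have hbq : (b * T⁻¹) ^ q = b ^ q * T⁻¹ ^ q := mul_rpow hb (by positivity)
  rw [hup, hbq]
  field_simp

private lemma prod_le_rpow_aux {α : ℝ} (hα : 0 < α) {s θ : ℝ} (hs : 0 < s) (hs1 : s ≤ 1)
    (hθ : 0 ≤ θ) (hθ1 : θ ≤ 1) {n i j : ℕ} (hj : 1 ≤ j)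
    (hi : (n:ℝ) ≤ (1 + α) * i) (hjq : (n:ℝ) ≤ (1 + α) * j) :
    s ^ i * θ ^ j ≤ (s ^ n * θ ^ n) ^ (1 / (1 + α)) := by
  set p := 1 + α with hp
  have hp1 : (1:ℝ) < p := by rw [hp]; linarith
  have hp0 : (0:ℝ) < p := by linarith
  rcases eq_or_lt_of_le hθ with h0 | hθpos
  · rw [← h0, zero_pow (by omega : j ≠ 0), mul_zero]
    positivity
  · have hR : (s ^ n * θ ^ n) ^ (1 / p) = s ^ ((n:ℝ) * (1/p)) * θ ^ ((n:ℝ) * (1/p)) := by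
      rw [← rpow_natCast s n, ← rpow_natCast θ n,
        mul_rpow (by positivity) (by positivity),
        ← rpow_mul hs.le, ← rpow_mul hθ]
    rw [hR, ← rpow_natCast s i, ← rpow_natCast θ j]
    have h1 : s ^ ((i:ℕ):ℝ) ≤ s ^ ((n:ℝ) * (1/p)) :=
      rpow_le_rpow_of_exponent_ge hs hs1 (by rw [mul_one_div, div_le_iff₀ hp0]; linarith [hi])
    have h2 : θ ^ ((j:ℕ):ℝ) ≤ θ ^ ((n:ℝ) * (1/p)) :=
      rpow_le_rpow_of_exponent_ge hθpos hθ1 (by rw [mul_one_div, div_le_iff₀ hp0]; linarith [hjq])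
    exact mul_le_mul h1 h2 (by positivity) (by positivity)

/-- The μ-Laplacian on a weighted graph. -/
noncomputable def graphLap {V : Type*} (ω : V → V → ℝ) (μ : V → ℝ)
    (h : V → ℝ) (x : V) : ℝ :=
  (∑' y, ω x y * (h y - h x)) / μ x

set_option maxHeartbeats 2000000 in
/-- Blow-up for the semilinear heat equation `∂ₜu = Δu + u^{1+α}` on a locally finite
connected weighted graph with volume growth of positive degree `m`: if `0 < mα < 1`,
then for every bounded, nonnegative, nontrivial initial value `a` there is no
nonnegative global solution. -/
theorem blowup_semilinear_heat
    {V : Type*} [Countable V] (ω : V → V → ℝ) (μ : V → ℝ)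
    (hsymm : ∀ x y, ω x y = ω y x)
    (hwnn : ∀ x y, 0 ≤ ω x y)
    (hμpos : ∀ x, 0 < μ x)
    (hlocfin : ∀ x, {y | 0 < ω x y}.Finite)
    (hdeg : ∀ x, ∃ y, 0 < ω x y)
    (hconn : ∀ x y, Relation.ReflTransGen (fun a b => 0 < ω a b) x y)
    (Dμ : ℝ) (hDμ : ∀ x, (∑' y, ω x y) / μ x ≤ Dμ)
    -- volume growth of positive degree `m`
    (m : ℝ) (hm : 0 < m) (c₀ : ℝ) (hc₀ : 0 < c₀)
    (hvol : ∀ (x : V) (r : ℝ), 1 ≤ r →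
      ∃ hfin : {y | ((SimpleGraph.fromRel fun a b => 0 < ω a b).dist x y : ℝ) ≤ r}.Finite,
        ∑ y ∈ hfin.toFinset, μ y ≤ c₀ * r ^ m)
    (α : ℝ) (hα : 0 < α) (hmα₀ : 0 < m * α) (hmα₁ : m * α < 1)
    -- the initial datum
    (a : V → ℝ)
    (ha_bdd : ∃ A, ∀ x, |a x| ≤ A)
    (ha_nonneg : ∀ x, 0 ≤ a x)
    (ha_nontriv : ∃ x, a x ≠ 0) :
    ¬ ∃ (u u' : ℝ → V → ℝ),
        (∀ x, ContinuousOn (fun t => u t x) (Ici (0:ℝ))) ∧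
        (∀ x, ∀ t > (0:ℝ), HasDerivAt (fun s => u s x) (u' t x) t) ∧
        (∀ t > (0:ℝ), ∀ x, u' t x = graphLap ω μ (u t) x + u t x ^ (1 + α)) ∧
        (∀ x, u 0 x = a x) ∧
        (∀ T > (0:ℝ), ∃ C, ∀ t ∈ Icc (0:ℝ) T, ∀ x, |u t x| ≤ C) ∧
        (∀ t ≥ (0:ℝ), ∀ x, 0 ≤ u t x) := by
  classical
  rintro ⟨u, u', hcont, hderiv, heqn, hinit, hbdd, hnn⟩
  obtain ⟨x₀, hx₀ne⟩ := ha_nontriv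
  have ha₀ : 0 < a x₀ := lt_of_le_of_ne (ha_nonneg x₀) (Ne.symm hx₀ne)
  set G := SimpleGraph.fromRel (fun a b => 0 < ω a b) with hGdef
  -- connectivity of G
  have hstep : ∀ b c : V, 0 < ω b c → G.Reachable b c := by
    intro b c hbc
    by_cases hbe : b = c
    · exact hbe ▸ SimpleGraph.Reachable.refl b
    · exact SimpleGraph.Adj.reachable ((SimpleGraph.fromRel_adj _ b c).mpr ⟨hbe, Or.inl hbc⟩)
  have hreach : ∀ x y : V, G.Reachable x y := by
    intro x y
    induction hconn x y with
    | refl => exact SimpleGraph.Reachable.refl x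
    | tail _ hbc ih => exact ih.trans (hstep _ _ hbc)
  have hconnG : G.Connected := by
    rw [SimpleGraph.connected_iff]
    exact ⟨fun x y => hreach x y, ⟨x₀⟩⟩
  have hdist_adj : ∀ x y, 0 < ω x y → G.dist x₀ y ≤ G.dist x₀ x + 1 := by
    intro x y hxy
    by_cases hxe : x = y
    · subst hxe; omega
    · have hadj : G.Adj x y := (SimpleGraph.fromRel_adj _ x y).mpr ⟨hxe, Or.inl hxy⟩
      have h1 : G.dist x y = 1 := SimpleGraph.dist_eq_one_iff_adj.mpr hadj
      have h2 := hconnG.dist_triangle (u := x₀) (v := x) (w := y)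
      omega
  have hDnn : 0 ≤ Dμ :=
    le_trans (div_nonneg (tsum_nonneg fun y => hwnn x₀ y) (hμpos x₀).le) (hDμ x₀)
  -- exponents
  have hq1 : (1:ℝ) < (1 + α) / α := by
    rw [lt_div_iff₀ hα]; linarith
  have hqm : m + 1 < (1 + α) / α := by
    rw [lt_div_iff₀ hα]; nlinarith
  set q : ℝ := (1 + α) / α with hqdef
  set n : ℕ := max 2 ⌈q⌉₊ with hndef
  have hn2 : 2 ≤ n := le_max_left _ _
  have hnq : q ≤ (n:ℝ) := le_trans (Nat.le_ceil q) (by exact_mod_cast Nat.cast_le.mpr (le_max_right 2 ⌈q⌉₊))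
  have hn1 : 1 ≤ n := by omega
  have hnn0 : n ≠ 0 := by omega
  have hcast : ((n - 1 : ℕ) : ℝ) = (n:ℝ) - 1 := by
    rw [Nat.cast_sub hn1, Nat.cast_one]
  have hexp : (n:ℝ) ≤ (1 + α) * ((n - 1 : ℕ) : ℝ) := by
    rw [hcast]
    have : (1 + α) / α ≤ (n:ℝ) := hnq
    rw [div_le_iff₀ hα] at this
    nlinarith
  have hexp' : (n:ℝ) ≤ (1 + α) * (n : ℝ) := by nlinarith [Nat.cast_nonneg (α := ℝ) n]
  set K₀ : ℝ := ((((1 + α) / 2) ^ (1 / (1 + α)))⁻¹ ^ q / q) with hK₀def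
  have hK₀ : 0 ≤ K₀ := by
    rw [hK₀def]
    positivity
  set K₁ : ℝ := K₀ * (((n:ℝ) * Dμ) ^ q + (n:ℝ) ^ q) with hK₁def
  have hK₁ : 0 ≤ K₁ := by
    rw [hK₁def]
    have h1 : (0:ℝ) ≤ ((n:ℝ) * Dμ) ^ q := rpow_nonneg (by positivity) _
    have h2 : (0:ℝ) ≤ ((n:ℝ)) ^ q := rpow_nonneg (by positivity) _
    nlinarith
  set C : ℝ := K₁ * c₀ * 2 ^ m with hCdef
  have hC : 0 ≤ C := by
    rw [hCdef]
    have h2m : (0:ℝ) ≤ (2:ℝ) ^ m := rpow_nonneg (by norm_num) _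
    exact mul_nonneg (mul_nonneg hK₁ hc₀.le) h2m
  set ε₀ : ℝ := μ x₀ * a x₀ with hε₀def
  have hε₀ : 0 < ε₀ := mul_pos (hμpos x₀) ha₀
  -- choose a large radius N
  obtain ⟨N, hNlt, hN1⟩ : ∃ N : ℕ, C * (N:ℝ) ^ (m + 1 - q) < ε₀ ∧ 1 ≤ N := by
    have ht : Filter.Tendsto (fun x : ℝ => C * x ^ (m + 1 - q)) Filter.atTop (nhds (C * 0)) := by
      have h0 := tendsto_rpow_neg_atTop (show (0:ℝ) < q - (m+1) by linarith)
      have h1 := h0.const_mul C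
      have : (fun x : ℝ => C * x ^ (-(q - (m+1)))) = fun x : ℝ => C * x ^ (m + 1 - q) := by
        funext x; congr 1; ring_nf
      rwa [this] at h1
    rw [mul_zero] at ht
    have ht2 := ht.comp (tendsto_natCast_atTop_atTop (R := ℝ))
    exact ((ht2.eventually_lt_const hε₀).and (Filter.eventually_ge_atTop 1)).exists
  set R : ℝ := (N : ℝ) with hRdef
  have hR1 : 1 ≤ R := by rw [hRdef]; exact_mod_cast hN1
  have hR0 : 0 < R := by linarith
  
  -- the cutoff function
  set d : V → ℝ := fun x => ((G.dist x₀ x : ℕ) : ℝ) with hddef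
  set θ : V → ℝ := fun x => max 0 (min 1 ((2*R - d x)/R)) with hθdef
  have hθ0 : ∀ x, 0 ≤ θ x := fun x => le_max_left _ _
  have hθ1 : ∀ x, θ x ≤ 1 := fun x => max_le zero_le_one (min_le_left _ _)
  have hdx₀ : d x₀ = 0 := by rw [hddef]; simp [SimpleGraph.dist_self]
  have hθx₀ : θ x₀ = 1 := by
    rw [hθdef]; simp only
    rw [hdx₀, sub_zero, mul_div_assoc, div_self hR0.ne']
    norm_num
  have hθzero : ∀ x, 2*R ≤ d x → θ x = 0 := by
    intro x hx
    rw [hθdef]; simp only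
    have h1 : (2*R - d x)/R ≤ 0 := div_nonpos_of_nonpos_of_nonneg (by linarith) hR0.le
    have h2 : min 1 ((2*R - d x)/R) ≤ 0 := le_trans (min_le_right _ _) h1
    exact max_eq_left h2
  have hθlip : ∀ x y, 0 < ω x y → θ x ≤ θ y + 1/R := by
    intro x y hxy
    have hd : d y ≤ d x + 1 := by
      rw [hddef]; simp only
      exact_mod_cast hdist_adj x y hxy
    rw [hθdef]; simp only
    apply clamp_le_aux _ (by positivity)
    rw [← add_div]
    gcongr
    linarith
  -- the finite ball
  obtain ⟨hfinS, hvolS⟩ := hvol x₀ (2*R) (by linarith)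
  set S : Finset V := hfinS.toFinset with hSdef
  have hSmem : ∀ x : V, x ∈ S ↔ d x ≤ 2*R := by
    intro x
    rw [hSdef, Set.Finite.mem_toFinset]
    exact Iff.rfl
  have hx₀S : x₀ ∈ S := (hSmem x₀).mpr (by rw [hdx₀]; linarith)
  -- neighbours
  set Nb : V → Finset V := fun x => (hlocfin x).toFinset with hNbdef
  have hNbmem : ∀ x y, y ∈ Nb x ↔ 0 < ω x y := by
    intro x y; rw [hNbdef]; exact Set.Finite.mem_toFinset _
  have hωzero : ∀ x y, y ∉ Nb x → ω x y = 0 := fun x y hy =>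
    le_antisymm (not_lt.mp fun h => hy ((hNbmem x y).mpr h)) (hwnn x y)
  set Lp : (V → ℝ) → V → ℝ := fun f x => ∑ y ∈ Nb x, ω x y * (f y - f x) with hLpdef
  have hLap : ∀ (f : V → ℝ) (x : V), μ x * graphLap ω μ f x = Lp f x := by
    intro f x
    unfold graphLap
    rw [tsum_eq_sum (s := Nb x) (fun y hy => by rw [hωzero x y hy, zero_mul]), mul_comm,
      div_mul_cancel₀ _ (hμpos x).ne']
  have hrow : ∀ x, ∑ y ∈ S, ω x y ≤ Dμ * μ x := by
    intro x
    have h1 : ∑ y ∈ S, ω x y ≤ ∑ y ∈ S ∪ Nb x, ω x y :=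
      Finset.sum_le_sum_of_subset_of_nonneg Finset.subset_union_left (fun y _ _ => hwnn x y)
    have h2 : ∑ y ∈ S ∪ Nb x, ω x y = ∑ y ∈ Nb x, ω x y :=
      (Finset.sum_subset Finset.subset_union_right (fun y _ hy => hωzero x y hy)).symm
    have h3 : (∑' y, ω x y) = ∑ y ∈ Nb x, ω x y :=
      tsum_eq_sum (fun y hy => hωzero x y hy)
    have h4 : (∑' y, ω x y) ≤ Dμ * μ x := by
      have := hDμ x
      rwa [div_le_iff₀ (hμpos x)] at this
    linarith
  -- discrete Green-type estimate
  have hA : ∀ f : V → ℝ, (∀ z, 0 ≤ f z) →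
      -(((n:ℝ) * Dμ / R) * ∑ x ∈ S, μ x * (θ x ^ (n-1) * f x))
        ≤ ∑ x ∈ S, θ x ^ n * Lp f x := by
    intro f hf
    have hstep1 : ∀ x ∈ S, θ x ^ n * Lp f x = ∑ y ∈ S, θ x ^ n * (ω x y * (f y - f x)) := by
      intro x hxS
      rw [hLpdef]; simp only
      rw [Finset.mul_sum]
      have e1 : ∑ y ∈ Nb x, θ x ^ n * (ω x y * (f y - f x))
          = ∑ y ∈ Nb x ∪ S, θ x ^ n * (ω x y * (f y - f x)) :=
        Finset.sum_subset Finset.subset_union_left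
          (fun y _ hy => by rw [hωzero x y hy]; ring)
      have e2 : ∑ y ∈ S, θ x ^ n * (ω x y * (f y - f x))
          = ∑ y ∈ Nb x ∪ S, θ x ^ n * (ω x y * (f y - f x)) := by
        apply Finset.sum_subset Finset.subset_union_right
        intro y hy hyS
        rcases (hwnn x y).eq_or_lt with h0 | hω
        · rw [← h0]; ring
        · have hdy : 2*R < d y := lt_of_not_ge (fun h => hyS ((hSmem y).mpr h))
          have hxd : 2*R ≤ d x := by
            have h1 : G.dist x₀ y ≤ G.dist x₀ x + 1 := hdist_adj x y hω
            rw [hddef] at hdy ⊢; simp only at hdy ⊢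
            rw [hRdef] at hdy ⊢
            have h2 : 2*N < G.dist x₀ y := by exact_mod_cast hdy
            have h3 : 2*N ≤ G.dist x₀ x := by omega
            exact_mod_cast h3
          rw [hθzero x hxd, zero_pow hnn0, zero_mul]
      rw [e1, e2]
    have hswap : ∑ x ∈ S, ∑ y ∈ S, θ x ^ n * (ω x y * f y)
        = ∑ x ∈ S, ∑ y ∈ S, θ y ^ n * (ω x y * f x) := by
      rw [Finset.sum_comm]
      exact Finset.sum_congr rfl (fun i _ => Finset.sum_congr rfl (fun j _ => by rw [hsymm j i]))
    have hexpand : ∑ x ∈ S, θ x ^ n * Lp f x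
        = ∑ x ∈ S, ∑ y ∈ S, (θ y ^ n * (ω x y * f x) - θ x ^ n * (ω x y * f x)) := by
      rw [Finset.sum_congr rfl hstep1]
      have hsplit : ∀ x ∈ S, ∑ y ∈ S, θ x ^ n * (ω x y * (f y - f x))
          = (∑ y ∈ S, θ x ^ n * (ω x y * f y)) - ∑ y ∈ S, θ x ^ n * (ω x y * f x) := by
        intro x _
        rw [← Finset.sum_sub_distrib]
        exact Finset.sum_congr rfl (fun y _ => by ring)
      rw [Finset.sum_congr rfl hsplit, Finset.sum_sub_distrib, hswap, ← Finset.sum_sub_distrib]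
      exact Finset.sum_congr rfl (fun x _ => (Finset.sum_sub_distrib _ _).symm)
    have hterm : ∀ x ∈ S, ∀ y ∈ S,
        -(ω x y * (((n:ℝ)/R) * (θ x ^ (n-1) * f x)))
          ≤ θ y ^ n * (ω x y * f x) - θ x ^ n * (ω x y * f x) := by
      intro x _ y _
      rcases (hwnn x y).eq_or_lt with h0 | hω
      · rw [← h0]; simp
      · have hkey : θ x ^ n - θ y ^ n ≤ ((n:ℝ)/R) * θ x ^ (n-1) := by
          rcases le_total (θ x) (θ y) with hle | hge
          · have h1 : θ x ^ n ≤ θ y ^ n := pow_le_pow_left₀ (hθ0 x) hle n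
            have h2 : (0:ℝ) ≤ ((n:ℝ)/R) * θ x ^ (n-1) := by positivity
            linarith
          · have h1 : θ x ^ n - θ y ^ n ≤ (n:ℝ) * θ x ^ (n-1) * (θ x - θ y) :=
              pow_sub_pow_le_aux (hθ0 y) hge n
            have h2 : θ x - θ y ≤ 1/R := by have := hθlip x y hω; linarith
            have h3 : (n:ℝ) * θ x ^ (n-1) * (θ x - θ y) ≤ (n:ℝ) * θ x ^ (n-1) * (1/R) :=
              mul_le_mul_of_nonneg_left h2 (by positivity)
            calc θ x ^ n - θ y ^ n ≤ (n:ℝ) * θ x ^ (n-1) * (θ x - θ y) := h1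
              _ ≤ (n:ℝ) * θ x ^ (n-1) * (1/R) := h3
              _ = ((n:ℝ)/R) * θ x ^ (n-1) := by ring
        have h4 := mul_le_mul_of_nonneg_right hkey (mul_nonneg hω.le (hf x))
        have h5 : (θ x ^ n - θ y ^ n) * (ω x y * f x)
            = θ x ^ n * (ω x y * f x) - θ y ^ n * (ω x y * f x) := by ring
        have h6 : ((n:ℝ)/R * θ x ^ (n-1)) * (ω x y * f x)
            = ω x y * (((n:ℝ)/R) * (θ x ^ (n-1) * f x)) := by ring
        linarith [h4, h5, h6]
    calc -(((n:ℝ) * Dμ / R) * ∑ x ∈ S, μ x * (θ x ^ (n-1) * f x))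
        = ∑ x ∈ S, -(Dμ * μ x * (((n:ℝ)/R) * (θ x ^ (n-1) * f x))) := by
          rw [Finset.mul_sum, ← Finset.sum_neg_distrib]
          exact Finset.sum_congr rfl (fun x _ => by ring)
      _ ≤ ∑ x ∈ S, ∑ y ∈ S, -(ω x y * (((n:ℝ)/R) * (θ x ^ (n-1) * f x))) := by
          apply Finset.sum_le_sum
          intro x _
          rw [Finset.sum_neg_distrib]
          apply neg_le_neg
          rw [← Finset.sum_mul]
          have hc : (0:ℝ) ≤ ((n:ℝ)/R) * (θ x ^ (n-1) * f x) :=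
            mul_nonneg (div_nonneg (Nat.cast_nonneg n) hR0.le)
              (mul_nonneg (pow_nonneg (hθ0 x) _) (hf x))
          calc (∑ y ∈ S, ω x y) * (((n:ℝ)/R) * (θ x ^ (n-1) * f x))
              ≤ (Dμ * μ x) * (((n:ℝ)/R) * (θ x ^ (n-1) * f x)) :=
                mul_le_mul_of_nonneg_right (hrow x) hc
            _ = Dμ * μ x * (((n:ℝ)/R) * (θ x ^ (n-1) * f x)) := by ring
      _ ≤ ∑ x ∈ S, ∑ y ∈ S, (θ y ^ n * (ω x y * f x) - θ x ^ n * (ω x y * f x)) :=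
          Finset.sum_le_sum (fun x hx => Finset.sum_le_sum (fun y hy => hterm x hx y hy))
      _ = ∑ x ∈ S, θ x ^ n * Lp f x := hexpand.symm
  -- pointwise Young estimate
  have hYoung : ∀ s : ℝ, 0 < s → s ≤ 1 → ∀ x : V, ∀ v : ℝ, 0 ≤ v →
      v * (((n:ℝ) * Dμ / R) * (s^n * θ x ^ (n-1)) + ((n:ℝ)/R) * (s^(n-1) * θ x ^ n))
        ≤ v ^ (1+α) * (s^n * θ x ^ n) + K₁ / R ^ q := by
    intro s hs hs1 x v hv
    have hθx := hθ0 x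
    have hθx1 := hθ1 x
    have hW : (0:ℝ) ≤ s^n * θ x ^ n := by positivity
    have h1 : s^n * θ x ^ (n-1) ≤ (s^n * θ x ^ n) ^ (1/(1+α)) :=
      prod_le_rpow_aux hα hs hs1 hθx hθx1 (by omega) hexp' hexp
    have h2 : s^(n-1) * θ x ^ n ≤ (s^n * θ x ^ n) ^ (1/(1+α)) :=
      prod_le_rpow_aux hα hs hs1 hθx hθx1 (by omega) hexp hexp'
    have hb1 : (0:ℝ) ≤ (n:ℝ) * Dμ / R := by positivity
    have hb2 : (0:ℝ) ≤ (n:ℝ) / R := by positivity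
    have hy1 := young_eps hα hv hW hb1
    have hy2 := young_eps hα hv hW hb2
    rw [← hqdef, ← hK₀def] at hy1 hy2
    have hz1 : v * (s^n * θ x ^ (n-1)) * ((n:ℝ)*Dμ/R)
        ≤ v ^ (1+α) * (s^n * θ x ^ n) / 2 + K₀ * ((n:ℝ)*Dμ/R)^q :=
      le_trans (mul_le_mul_of_nonneg_right (mul_le_mul_of_nonneg_left h1 hv) hb1) hy1
    have hz2 : v * (s^(n-1) * θ x ^ n) * ((n:ℝ)/R)
        ≤ v ^ (1+α) * (s^n * θ x ^ n) / 2 + K₀ * ((n:ℝ)/R)^q :=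
      le_trans (mul_le_mul_of_nonneg_right (mul_le_mul_of_nonneg_left h2 hv) hb2) hy2
    have hdiv1 : ((n:ℝ)*Dμ/R)^q = ((n:ℝ)*Dμ)^q / R^q := div_rpow (by positivity) hR0.le q
    have hdiv2 : ((n:ℝ)/R)^q = (n:ℝ)^q / R^q := div_rpow (by positivity) hR0.le q
    have hKq : K₀ * ((n:ℝ)*Dμ/R)^q + K₀ * ((n:ℝ)/R)^q = K₁ / R^q := by
      rw [hdiv1, hdiv2, hK₁def]
      ring
    have hLHS : v * (((n:ℝ) * Dμ / R) * (s^n * θ x ^ (n-1)) + ((n:ℝ)/R) * (s^(n-1) * θ x ^ n))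
        = v * (s^n * θ x ^ (n-1)) * ((n:ℝ)*Dμ/R) + v * (s^(n-1) * θ x ^ n) * ((n:ℝ)/R) := by
      ring
    rw [hLHS]
    linarith [hz1, hz2, hKq]
  -- the energy function
  set E : ℝ → ℝ := fun t => ∑ x ∈ S, μ x * (u t x * ((1 - t/R)^n * θ x ^ n)) with hEdef
  set δ : ℝ := (∑ x ∈ S, μ x) * (K₁ / R ^ q) with hδdef
  have hμSnn : (0:ℝ) ≤ ∑ x ∈ S, μ x := Finset.sum_nonneg fun x _ => (hμpos x).le
  have hδ0 : 0 ≤ δ := by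
    rw [hδdef]
    exact mul_nonneg hμSnn (by positivity)
  set F : ℝ → ℝ := fun t => E t + δ * t with hFdef
  set Df : ℝ → ℝ := fun t => ∑ x ∈ S, μ x * (u' t x * ((1 - t/R)^n * θ x ^ n)
      + u t x * (((n:ℝ) * (1 - t/R)^(n-1) * (-(1/R))) * θ x ^ n)) with hDfdef
  have hFd : ∀ t ∈ Ioo (0:ℝ) R, HasDerivAt F (Df t + δ) t := by
    intro t ht
    have hψd : HasDerivAt (fun t : ℝ => (1 - t/R)^n)
        ((n:ℝ) * (1 - t/R)^(n-1) * (-(1/R))) t := by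
      have h0 : HasDerivAt (fun t : ℝ => 1 - t/R) (-(1/R)) t :=
        ((hasDerivAt_id t).div_const R).const_sub 1
      exact h0.pow n
    have hEd : HasDerivAt E (Df t) t := by
      rw [hEdef, hDfdef]
      exact HasDerivAt.fun_sum (fun x _ =>
        ((hderiv x t ht.1).mul (hψd.mul_const (θ x ^ n))).const_mul (μ x))
    have hlin : HasDerivAt (fun t : ℝ => δ * t) δ t := by
      simpa using (hasDerivAt_id t).const_mul δ
    have := hEd.add hlin
    rw [hFdef]
    exact this
  -- derivative bounded below
  have hD0 : ∀ t ∈ Ioo (0:ℝ) R, 0 ≤ Df t + δ := by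
    intro t ht
    have hsp : 0 < 1 - t/R := by
      have : t/R < 1 := (div_lt_one hR0).mpr ht.2
      linarith
    have hsp1 : 1 - t/R ≤ 1 := by
      have : 0 ≤ t/R := div_nonneg ht.1.le hR0.le
      linarith
    have hu0 : ∀ x, 0 ≤ u t x := hnn t ht.1.le
    have hrw : Df t = (1 - t/R)^n * (∑ x ∈ S, θ x ^ n * Lp (u t) x)
        + ((∑ x ∈ S, μ x * (u t x ^ (1+α) * ((1 - t/R)^n * θ x ^ n)))
          - ∑ x ∈ S, μ x * (u t x * (((n:ℝ)/R) * ((1 - t/R)^(n-1) * θ x ^ n)))) := by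
      rw [hDfdef]; simp only
      have hper : ∀ x ∈ S, μ x * (u' t x * ((1 - t/R)^n * θ x ^ n)
            + u t x * (((n:ℝ) * (1 - t/R)^(n-1) * (-(1/R))) * θ x ^ n))
          = (1 - t/R)^n * (θ x ^ n * Lp (u t) x)
            + (μ x * (u t x ^ (1+α) * ((1 - t/R)^n * θ x ^ n))
              - μ x * (u t x * (((n:ℝ)/R) * ((1 - t/R)^(n-1) * θ x ^ n)))) := by
        intro x _
        rw [heqn t ht.1 x, ← hLap (u t) x]
        ring
      rw [Finset.sum_congr rfl hper, Finset.sum_add_distrib, Finset.sum_sub_distrib,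
        ← Finset.mul_sum]
    have hGreen := hA (u t) hu0
    have h7 : -((1 - t/R)^n * (((n:ℝ)*Dμ/R) * ∑ x ∈ S, μ x * (θ x ^ (n-1) * u t x)))
        ≤ (1 - t/R)^n * ∑ x ∈ S, θ x ^ n * Lp (u t) x := by
      have h := mul_le_mul_of_nonneg_left hGreen (pow_nonneg hsp.le n)
      rwa [mul_neg] at h
    have h8 : ∀ x ∈ S, μ x * (u t x * (((n:ℝ)*Dμ/R) * ((1 - t/R)^n * θ x ^ (n-1))
          + ((n:ℝ)/R) * ((1 - t/R)^(n-1) * θ x ^ n)))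
        ≤ μ x * (u t x ^ (1+α) * ((1 - t/R)^n * θ x ^ n)) + μ x * (K₁ / R^q) := by
      intro x _
      have hYx := hYoung (1 - t/R) hsp hsp1 x (u t x) (hu0 x)
      calc μ x * (u t x * (((n:ℝ)*Dμ/R) * ((1 - t/R)^n * θ x ^ (n-1))
            + ((n:ℝ)/R) * ((1 - t/R)^(n-1) * θ x ^ n)))
          ≤ μ x * (u t x ^ (1+α) * ((1 - t/R)^n * θ x ^ n) + K₁ / R^q) :=
            mul_le_mul_of_nonneg_left hYx (hμpos x).le
        _ = μ x * (u t x ^ (1+α) * ((1 - t/R)^n * θ x ^ n)) + μ x * (K₁ / R^q) := by ring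
    have h9 : ∑ x ∈ S, μ x * (u t x * (((n:ℝ)*Dμ/R) * ((1 - t/R)^n * θ x ^ (n-1))
          + ((n:ℝ)/R) * ((1 - t/R)^(n-1) * θ x ^ n)))
        = (1 - t/R)^n * (((n:ℝ)*Dμ/R) * ∑ x ∈ S, μ x * (θ x ^ (n-1) * u t x))
          + ∑ x ∈ S, μ x * (u t x * (((n:ℝ)/R) * ((1 - t/R)^(n-1) * θ x ^ n))) := by
      rw [Finset.mul_sum, Finset.mul_sum, ← Finset.sum_add_distrib]
      exact Finset.sum_congr rfl (fun x _ => by ring)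
    have h10 : ∑ x ∈ S, (μ x * (u t x ^ (1+α) * ((1 - t/R)^n * θ x ^ n)) + μ x * (K₁ / R^q))
        = (∑ x ∈ S, μ x * (u t x ^ (1+α) * ((1 - t/R)^n * θ x ^ n)))
          + (∑ x ∈ S, μ x) * (K₁ / R^q) := by
      rw [Finset.sum_add_distrib, ← Finset.sum_mul]
    have h11 := (Finset.sum_le_sum h8).trans_eq h10
    rw [h9] at h11
    rw [hrw, hδdef]
    linarith [h7, h11]
  -- monotonicity
  have hmono : MonotoneOn F (Icc 0 R) := by
    apply monotoneOn_of_deriv_nonneg (convex_Icc 0 R)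
    · simp only [hFdef, hEdef]
      apply ContinuousOn.add
      · apply continuousOn_finset_sum
        intro x _
        have hc2 : Continuous fun t : ℝ => (1 - t/R)^n * θ x ^ n :=
          ((continuous_const.sub (continuous_id.div_const R)).pow n).mul continuous_const
        exact continuousOn_const.mul
          (((hcont x).mono (Icc_subset_Ici_self)).mul hc2.continuousOn)
      · exact (continuous_const.mul continuous_id).continuousOn
    · rw [interior_Icc]
      intro t ht
      exact (hFd t ht).differentiableAt.differentiableWithinAt
    · rw [interior_Icc]
      intro t ht
      rw [(hFd t ht).deriv]
      exact hD0 t ht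
  have hFF : F 0 ≤ F R := hmono ⟨le_refl _, hR0.le⟩ ⟨hR0.le, le_refl _⟩ hR0.le
  have hER : E R = 0 := by
    rw [hEdef]; simp only
    apply Finset.sum_eq_zero
    intro x _
    rw [div_self hR0.ne', sub_self, zero_pow hnn0]
    ring
  have hE0 : ε₀ ≤ E 0 := by
    rw [hEdef]; simp only
    have h1 : ∀ x ∈ S, μ x * (u 0 x * ((1 - 0/R)^n * θ x ^ n)) = μ x * (a x * θ x ^ n) := by
      intro x _
      rw [hinit x, zero_div, sub_zero, one_pow, one_mul]
    rw [Finset.sum_congr rfl h1]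
    have h2 := Finset.single_le_sum (f := fun x => μ x * (a x * θ x ^ n))
      (fun i _ => mul_nonneg (hμpos i).le (mul_nonneg (ha_nonneg i) (pow_nonneg (hθ0 i) n))) hx₀S
    simp only [hθx₀, one_pow, mul_one] at h2
    rw [hε₀def]
    exact h2
  have hfin1 : ε₀ ≤ δ * R := by
    have e0 : F 0 = E 0 := by rw [hFdef]; simp
    have eR : F R = δ * R := by rw [hFdef]; simp only; rw [hER]; ring
    linarith [hE0, hFF]
  have hfin2 : δ * R ≤ C * R ^ (m + 1 - q) := by
    have hK : (0:ℝ) ≤ K₁ / R^q * R := by positivity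
    have h2m : ((2:ℝ)*R)^m = 2^m * R^m := mul_rpow (by norm_num) hR0.le
    have hRm : R^(m+1-q) = R^m * R / R^q := by
      rw [show m + 1 - q = (m + 1) - q by ring, rpow_sub hR0, rpow_add hR0, rpow_one]
    calc δ * R = (∑ x ∈ S, μ x) * (K₁ / R^q * R) := by rw [hδdef]; ring
      _ ≤ (c₀ * (2*R)^m) * (K₁ / R^q * R) := mul_le_mul_of_nonneg_right hvolS hK
      _ = C * R^(m+1-q) := by
          rw [h2m, hRm, hCdef]
          ring
  linarith [hNlt, hfin1, hfin2]
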